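/- Let k ≥ 3 and 1 ≤ b < k, and let H be a k-graph on n vertices. Suppose 𝒴 = {Y_1,...,Y_m} is a maximum Y_{k,b}-tiling of H, U is the set of vertices not covered by 𝒴, and C is the set of covered vertices v with deg(v, U) ≥ (2k−b)²·C(|U|, k−2), where |U| ≥ 2(2k−b)². Then every member Y_i of 𝒴 contains at most one vertex of C. -/

import Mathlib

open Finset


lemma powAux (d : ℕ) : ∀ (m a : ℕ), 2*m*d ≤ a → (a+d)^m * a ≤ (a + 2*m*d) * a^m := by
  intro m
  induction m with
  | zero => intro a _; simp
  | succ m ih =>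
    intro a h
    have h' : 2*m*d ≤ a := by nlinarith
    have ihm := ih a h'
    calc (a+d)^(m+1) * a = ((a+d)^m * a) * (a+d) := by ring
      _ ≤ ((a + 2*m*d) * a^m) * (a+d) := Nat.mul_le_mul_right _ ihm
      _ = ((a + 2*m*d) * (a+d)) * a^m := by ring
      _ ≤ ((a + 2*(m+1)*d) * a) * a^m := Nat.mul_le_mul_right _ (by nlinarith)
      _ = (a + 2*(m+1)*d) * a^(m+1) := by ring

lemma powBound {m a d : ℕ} (h : 2*m*d ≤ a) (ha : 0 < a) : (a+d)^m ≤ 2 * a^m := by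
  have := powAux d m a h
  have h2 : (a+d)^m * a ≤ (2 * a^m) * a := by
    calc (a+d)^m * a ≤ (a + 2*m*d) * a^m := this
      _ ≤ (2*a) * a^m := Nat.mul_le_mul_right _ (by omega)
      _ = (2 * a^m) * a := by ring
  exact Nat.le_of_mul_le_mul_right h2 ha

set_option maxHeartbeats 1000000 in
lemma numericAux (c d w : ℕ) (hcd : 1 ≤ c + d)
    (hw : 2*(c+2*d+3)^2 ≤ w + (c+2*d+3)) :
    w.choose c * ((d+1) * w.choose d) <
      (c+2*d+3)*(c+2*d+2) * w.choose (c+d) * (c+d+1).choose c := by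
  have hwbig : c + d ≤ w := by nlinarith [sq_nonneg (c+2*d+3)]
  set a : ℕ := w + 1 - (c+d) with ha
  have haw : a + (c+d-1) = w := by omega
  have hapos : 0 < a := by omega
  -- w^(c+d) ≤ 2*a^(c+d)
  obtain ⟨e, he⟩ : ∃ e, c + d = e + 1 := ⟨c+d-1, by omega⟩
  obtain ⟨f, hf⟩ : ∃ f, c + 2*d + 3 = e + 4 + f := ⟨c+2*d+3-(e+4), by omega⟩
  have hw2 : 2*((e+4+f)*(e+4+f)) ≤ w + (e+4+f) := by
    have : (c+2*d+3)^2 = (e+4+f)*(e+4+f) := by rw [hf]; ring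
    omega
  have hcond : 2*(c+d)*(c+d-1) ≤ a := by
    have h4 : 2*(e+1)*e + e ≤ w := by nlinarith [hw2]
    have h7 : w - e ≤ a := by omega
    have h8 : 2*(c+d)*(c+d-1) = 2*(e+1)*e := by rw [he]; simp
    rw [h8]
    exact le_trans (Nat.le_sub_of_add_le h4) h7
  have hpow : w^(c+d) ≤ 2 * a^(c+d) := by
    calc w^(c+d) = (a + (c+d-1))^(c+d) := by rw [haw]
      _ ≤ 2 * a^(c+d) := powBound hcond hapos
  -- choose bounds
  have f1 : Nat.factorial c * w.choose c ≤ w^c := by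
    rw [← Nat.descFactorial_eq_factorial_mul_choose]; exact Nat.descFactorial_le_pow w c
  have f2 : Nat.factorial d * w.choose d ≤ w^d := by
    rw [← Nat.descFactorial_eq_factorial_mul_choose]; exact Nat.descFactorial_le_pow w d
  have f3 : a^(c+d) ≤ Nat.factorial (c+d) * w.choose (c+d) := by
    rw [← Nat.descFactorial_eq_factorial_mul_choose, ha]
    exact Nat.pow_sub_le_descFactorial w (c+d)
  have f4 : (c+d+1).choose c * Nat.factorial c * Nat.factorial (d+1) = Nat.factorial (c+d+1) := by
    have := Nat.choose_mul_factorial_mul_factorial (show c ≤ c+d+1 by omega)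
    simpa [show c+d+1-c = d+1 by omega] using this
  -- final comparison after multiplying by M
  set M : ℕ := 2 * (Nat.factorial c * (Nat.factorial d * ((d+1) * Nat.factorial (c+d)))) with hM
  have hMpos : 0 < M := by positivity
  apply Nat.lt_of_mul_lt_mul_left (a := M)
  have hL : M * (w.choose c * ((d+1) * w.choose d)) ≤ 4 * ((d+1)*(d+1)) * Nat.factorial (c+d) * a^(c+d) := by
    calc M * (w.choose c * ((d+1) * w.choose d))
        = 2 * ((d+1)*(d+1)) * Nat.factorial (c+d) * ((Nat.factorial c * w.choose c) * (Nat.factorial d * w.choose d)) := by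
          rw [hM]; ring
      _ ≤ 2 * ((d+1)*(d+1)) * Nat.factorial (c+d) * (w^c * w^d) :=
          Nat.mul_le_mul_left _ (Nat.mul_le_mul f1 f2)
      _ = 2 * ((d+1)*(d+1)) * Nat.factorial (c+d) * w^(c+d) := by rw [← pow_add]
      _ ≤ 2 * ((d+1)*(d+1)) * Nat.factorial (c+d) * (2 * a^(c+d)) := Nat.mul_le_mul_left _ hpow
      _ = 4 * ((d+1)*(d+1)) * Nat.factorial (c+d) * a^(c+d) := by ring
  have hR : 2 * (c+2*d+3)*(c+2*d+2) * ((c+d+1) * Nat.factorial (c+d)) * a^(c+d)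
      ≤ M * ((c+2*d+3)*(c+2*d+2) * w.choose (c+d) * (c+d+1).choose c) := by
    calc 2 * (c+2*d+3)*(c+2*d+2) * ((c+d+1) * Nat.factorial (c+d)) * a^(c+d)
        = 2 * (c+2*d+3)*(c+2*d+2) * Nat.factorial (c+d+1) * a^(c+d) := by
          rw [show (c+d+1) * Nat.factorial (c+d) = Nat.factorial (c+d+1) from (Nat.factorial_succ (c+d)).symm]
      _ = 2 * (c+2*d+3)*(c+2*d+2) * ((c+d+1).choose c * Nat.factorial c * Nat.factorial (d+1)) * a^(c+d) := by rw [f4]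
      _ ≤ 2 * (c+2*d+3)*(c+2*d+2) * ((c+d+1).choose c * Nat.factorial c * Nat.factorial (d+1)) * (Nat.factorial (c+d) * w.choose (c+d)) := Nat.mul_le_mul_left _ f3
      _ = M * ((c+2*d+3)*(c+2*d+2) * w.choose (c+d) * (c+d+1).choose c) := by
          rw [hM, Nat.factorial_succ d]; ring
  have hmid : 4 * ((d+1)*(d+1)) * Nat.factorial (c+d) * a^(c+d)
      < 2 * (c+2*d+3)*(c+2*d+2) * ((c+d+1) * Nat.factorial (c+d)) * a^(c+d) := by
    have hfpos : 0 < Nat.factorial (c+d) := Nat.factorial_pos _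
    have hppos : 0 < a^(c+d) := pow_pos hapos _
    have hq : 4 * ((d+1)*(d+1)) < 2*(2*d+3)*(2*d+2)*1 := by nlinarith
    have : 4 * ((d+1)*(d+1)) < 2 * (c+2*d+3)*(c+2*d+2) * (c+d+1) := by
      refine lt_of_lt_of_le hq (Nat.mul_le_mul (Nat.mul_le_mul (by omega) (by omega)) (by omega))
    calc 4 * ((d+1)*(d+1)) * Nat.factorial (c+d) * a^(c+d)
        < (2 * (c+2*d+3)*(c+2*d+2) * (c+d+1)) * Nat.factorial (c+d) * a^(c+d) := by
          exact (Nat.mul_lt_mul_right hppos).mpr ((Nat.mul_lt_mul_right hfpos).mpr this)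
      _ = 2 * (c+2*d+3)*(c+2*d+2) * ((c+d+1) * Nat.factorial (c+d)) * a^(c+d) := by ring
  calc M * (w.choose c * ((d+1) * w.choose d)) ≤ 4 * ((d+1)*(d+1)) * Nat.factorial (c+d) * a^(c+d) := hL
    _ < 2 * (c+2*d+3)*(c+2*d+2) * ((c+d+1) * Nat.factorial (c+d)) * a^(c+d) := hmid
    _ ≤ M * ((c+2*d+3)*(c+2*d+2) * w.choose (c+d) * (c+d+1).choose c) := hR


lemma numeric (k b w : ℕ) (hk : 3 ≤ k) (hb1 : 1 ≤ b) (hbk : b < k)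
    (hw : 2*(2*k-b)^2 ≤ w + (2*k-b)) :
    w.choose (b-1) * ((k-b) * w.choose (k-b-1)) <
      (2*k-b)*(2*k-b-1) * w.choose (k-2) * (k-1).choose (b-1) := by
  obtain ⟨c, hc⟩ : ∃ c, b = c+1 := ⟨b-1, by omega⟩
  obtain ⟨d, hd⟩ : ∃ d, k = c+d+2 := ⟨k-b-1, by omega⟩
  rw [show 2*k-b-1 = c+2*d+2 by omega, show 2*k-b = c+2*d+3 by omega,
    show k-b-1 = d by omega, show k-b = d+1 by omega, show k-2 = c+d by omega,
    show k-1 = c+d+1 by omega, show b-1 = c by omega]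
  rw [show 2*k-b = c+2*d+3 by omega] at hw
  exact numericAux c d w (by omega) hw

lemma exists_pair {V : Type*} [DecidableEq V] (k b : ℕ) (hk : 3 ≤ k) (hb1 : 1 ≤ b)
    (hbk : b < k) (W : Finset V) (F : Finset (Finset V)) (hF : F ⊆ W.powersetCard (k-1))
    (hw : 2*(2*k-b)^2 ≤ W.card + (2*k-b))
    (hcard : (2*k-b)*(2*k-b-1) * (W.card.choose (k-2)) ≤ F.card) :
    ∃ A ∈ F, ∃ B ∈ F, (A ∩ B).card = b - 1 := by
  classical
  set w := W.card with hwdef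
  have hmemF : ∀ e ∈ F, e ⊆ W ∧ e.card = k-1 := fun e he =>
    Finset.mem_powersetCard.mp (hF he)
  set P := W.powersetCard (b-1) with hP
  have htot : ∑ S ∈ P, (F.filter (fun e => S ⊆ e)).card = F.card * (k-1).choose (b-1) := by
    calc ∑ S ∈ P, (F.filter (fun e => S ⊆ e)).card
        = ∑ S ∈ P, ∑ e ∈ F, if S ⊆ e then 1 else 0 := by
          refine Finset.sum_congr rfl (fun S _ => ?_); exact Finset.card_filter _ _
      _ = ∑ e ∈ F, ∑ S ∈ P, if S ⊆ e then 1 else 0 := Finset.sum_comm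
      _ = ∑ e ∈ F, (P.filter (fun S => S ⊆ e)).card := by
          refine Finset.sum_congr rfl (fun e _ => ?_); exact (Finset.card_filter _ _).symm
      _ = ∑ e ∈ F, (k-1).choose (b-1) := by
          refine Finset.sum_congr rfl (fun e he => ?_)
          have hme := hmemF e he
          have heq : P.filter (fun S => S ⊆ e) = e.powersetCard (b-1) := by
            ext S
            simp only [hP, Finset.mem_filter, Finset.mem_powersetCard]
            constructor
            · rintro ⟨⟨_, h2⟩, h3⟩; exact ⟨h3, h2⟩
            · rintro ⟨h3, h2⟩; exact ⟨⟨h3.trans hme.1, h2⟩, h3⟩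
          rw [heq, Finset.card_powersetCard, hme.2]
      _ = F.card * (k-1).choose (b-1) := by rw [Finset.sum_const, smul_eq_mul]
  set t := (k-b) * w.choose (k-b-1) with ht
  have hS : ∃ S ∈ P, t < (F.filter (fun e => S ⊆ e)).card := by
    by_contra hcon
    push_neg at hcon
    have hle : F.card * (k-1).choose (b-1) ≤ w.choose (b-1) * t := by
      rw [← htot, ← Finset.card_powersetCard (b-1) W]
      calc ∑ S ∈ P, (F.filter (fun e => S ⊆ e)).card ≤ ∑ _S ∈ P, t :=
            Finset.sum_le_sum (fun S hSp => hcon S hSp)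
        _ = P.card * t := by rw [Finset.sum_const, smul_eq_mul]
    have hnum := numeric k b w hk hb1 hbk hw
    have hge : (2*k-b)*(2*k-b-1) * w.choose (k-2) * (k-1).choose (b-1)
        ≤ F.card * (k-1).choose (b-1) := Nat.mul_le_mul_right _ hcard
    exact absurd (le_trans hge hle) (not_le.mpr hnum)
  obtain ⟨S, hSP, hSd⟩ := hS
  obtain ⟨hSW, hScard⟩ := Finset.mem_powersetCard.mp hSP
  have hne : (F.filter (fun e => S ⊆ e)).Nonempty := Finset.card_pos.mp (by omega)
  obtain ⟨e1, he1mem⟩ := hne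
  obtain ⟨he1F, hSe1⟩ := Finset.mem_filter.mp he1mem
  have he1card := (hmemF e1 he1F).2
  have he1S : (e1 \ S).card = k - b := by
    rw [Finset.card_sdiff_of_subset hSe1, he1card, hScard]; omega
  have hG : (F.filter (fun e => S ⊆ e ∧ (e ∩ (e1 \ S)).Nonempty)).card ≤ t := by
    have hsub : F.filter (fun e => S ⊆ e ∧ (e ∩ (e1 \ S)).Nonempty) ⊆
        (e1 \ S).biUnion (fun z => F.filter (fun e => S ⊆ e ∧ z ∈ e)) := by
      intro e he
      obtain ⟨heF, hSe, z, hz⟩ := Finset.mem_filter.mp he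
      rw [Finset.mem_inter] at hz
      exact Finset.mem_biUnion.mpr ⟨z, hz.2, Finset.mem_filter.mpr ⟨heF, hSe, hz.1⟩⟩
    have hzb : ∀ z ∈ e1 \ S, (F.filter (fun e => S ⊆ e ∧ z ∈ e)).card ≤ w.choose (k-b-1) := by
      intro z hzmem
      have hzS : z ∉ S := (Finset.mem_sdiff.mp hzmem).2
      have hinj : (F.filter (fun e => S ⊆ e ∧ z ∈ e)).card ≤ (W.powersetCard (k-b-1)).card := by
        apply Finset.card_le_card_of_injOn (fun e => e \ insert z S)
        · intro e he
          obtain ⟨heF, hSe, hze⟩ := Finset.mem_filter.mp he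
          have hm := hmemF e heF
          have hins : insert z S ⊆ e := by
            intro u hu
            rcases Finset.mem_insert.mp hu with rfl | hu
            · exact hze
            · exact hSe hu
          rw [Finset.mem_coe, Finset.mem_powersetCard]
          refine ⟨(Finset.sdiff_subset).trans hm.1, ?_⟩
          rw [Finset.card_sdiff_of_subset hins, Finset.card_insert_of_notMem hzS, hm.2, hScard]
          omega
        · intro x hx y hy heq
          simp only [Finset.coe_filter, Set.mem_setOf_eq] at hx hy
          have hxi : insert z S ⊆ x := by
            intro u hu
            rcases Finset.mem_insert.mp hu with rfl | hu
            · exact hx.2.2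
            · exact hx.2.1 hu
          have hyi : insert z S ⊆ y := by
            intro u hu
            rcases Finset.mem_insert.mp hu with rfl | hu
            · exact hy.2.2
            · exact hy.2.1 hu
          have : x \ insert z S ∪ insert z S = y \ insert z S ∪ insert z S := by
            simp only [] at heq; rw [heq]
          rwa [Finset.sdiff_union_of_subset hxi, Finset.sdiff_union_of_subset hyi] at this
      rwa [Finset.card_powersetCard] at hinj
    calc (F.filter (fun e => S ⊆ e ∧ (e ∩ (e1 \ S)).Nonempty)).card
        ≤ ((e1 \ S).biUnion (fun z => F.filter (fun e => S ⊆ e ∧ z ∈ e))).card :=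
          Finset.card_le_card hsub
      _ ≤ ∑ z ∈ e1 \ S, (F.filter (fun e => S ⊆ e ∧ z ∈ e)).card := Finset.card_biUnion_le
      _ ≤ ∑ _z ∈ e1 \ S, w.choose (k-b-1) := Finset.sum_le_sum hzb
      _ = (e1 \ S).card * w.choose (k-b-1) := by rw [Finset.sum_const, smul_eq_mul]
      _ = t := by rw [he1S, ht]
  have hex2 : ∃ e2 ∈ F.filter (fun e => S ⊆ e),
      e2 ∉ F.filter (fun e => S ⊆ e ∧ (e ∩ (e1 \ S)).Nonempty) := by
    by_contra hcon
    push_neg at hcon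
    have : (F.filter (fun e => S ⊆ e)).card ≤
        (F.filter (fun e => S ⊆ e ∧ (e ∩ (e1 \ S)).Nonempty)).card :=
      Finset.card_le_card hcon
    omega
  obtain ⟨e2, he2mem, he2not⟩ := hex2
  obtain ⟨he2F, hSe2⟩ := Finset.mem_filter.mp he2mem
  have he2e1 : e2 ∩ (e1 \ S) = ∅ := by
    by_contra hcon
    exact he2not (Finset.mem_filter.mpr ⟨he2F, hSe2,
      Finset.nonempty_iff_ne_empty.mpr hcon⟩)
  refine ⟨e1, he1F, e2, he2F, ?_⟩
  have : e1 ∩ e2 = S := by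
    apply Finset.Subset.antisymm
    · intro u hu
      obtain ⟨hu1, hu2⟩ := Finset.mem_inter.mp hu
      by_contra huS
      have : u ∈ e2 ∩ (e1 \ S) :=
        Finset.mem_inter.mpr ⟨hu2, Finset.mem_sdiff.mpr ⟨hu1, huS⟩⟩
      rw [he2e1] at this
      exact absurd this (Finset.notMem_empty u)
    · intro u hu
      exact Finset.mem_inter.mpr ⟨hSe1 hu, hSe2 hu⟩
  rw [this, hScard]

lemma count_contain {V : Type*} [DecidableEq V] (kk : ℕ) (U : Finset V) (z : V)
    (hkk : 1 ≤ kk) :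
    ((U.powersetCard kk).filter (fun T => z ∈ T)).card ≤ U.card.choose (kk-1) := by
  have hinj : ((U.powersetCard kk).filter (fun T => z ∈ T)).card
      ≤ (U.powersetCard (kk-1)).card := by
    apply Finset.card_le_card_of_injOn (fun T => T.erase z)
    · intro T hT
      obtain ⟨hTP, hzT⟩ := Finset.mem_filter.mp hT
      obtain ⟨hTU, hTc⟩ := Finset.mem_powersetCard.mp hTP
      rw [Finset.mem_coe, Finset.mem_powersetCard]
      exact ⟨(Finset.erase_subset _ _).trans hTU, by rw [Finset.card_erase_of_mem hzT, hTc]⟩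
    · intro T1 h1 T2 h2 heq
      simp only [Finset.coe_filter, Set.mem_setOf_eq] at h1 h2
      simp only [] at heq
      have : insert z (T1.erase z) = insert z (T2.erase z) := by rw [heq]
      rwa [Finset.insert_erase h1.2, Finset.insert_erase h2.2] at this
  rwa [Finset.card_powersetCard] at hinj


set_option maxHeartbeats 2000000 in
/-- If `𝒴` is a maximum `Y_{k,b}`-tiling of a `k`-graph `H`, `U` the set of uncovered
vertices with `|U| ≥ 2(2k−b)²`, and `C` the set of covered vertices `v` with
`deg(v,U) ≥ (2k−b)²·C(|U|, k−2)`, then every member of `𝒴` contains at most one vertex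
of `C`.  Copies of `Y_{k,b}` are recorded as pairs of edges sharing exactly `b`
vertices. -/
theorem max_tiling_at_most_one_large_degree_vertex
    {V : Type*} [Fintype V] [DecidableEq V]
    (k b : ℕ) (hk : 3 ≤ k) (hb1 : 1 ≤ b) (hbk : b < k)
    (E : Finset (Finset V)) (hE : ∀ e ∈ E, e.card = k)
    (𝒴 : Finset (Finset V × Finset V))
    (h𝒴 : ∀ p ∈ 𝒴, p.1 ∈ E ∧ p.2 ∈ E ∧ (p.1 ∩ p.2).card = b)
    (h𝒴disj : ∀ p ∈ 𝒴, ∀ q ∈ 𝒴, p ≠ q → Disjoint (p.1 ∪ p.2) (q.1 ∪ q.2))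
    (hmax : ∀ T : Finset (Finset V × Finset V),
      (∀ p ∈ T, p.1 ∈ E ∧ p.2 ∈ E ∧ (p.1 ∩ p.2).card = b) →
      (∀ p ∈ T, ∀ q ∈ T, p ≠ q → Disjoint (p.1 ∪ p.2) (q.1 ∪ q.2)) →
      T.card ≤ 𝒴.card)
    (U : Finset V) (hU : U = Finset.univ \ 𝒴.biUnion (fun p => p.1 ∪ p.2))
    (hUcard : 2 * (2 * k - b) ^ 2 ≤ U.card)
    (C : Finset V)
    (hC : C = (𝒴.biUnion (fun p => p.1 ∪ p.2)).filter (fun v =>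
      (2 * k - b) ^ 2 * U.card.choose (k - 2) ≤
        ((U.powersetCard (k - 1)).filter (fun T => insert v T ∈ E)).card)) :
    ∀ p ∈ 𝒴, ((p.1 ∪ p.2) ∩ C).card ≤ 1 := by
  intro p hp
  by_contra hcontra
  push_neg at hcontra
  obtain ⟨x, hx, y, hy, hxy⟩ := Finset.one_lt_card.mp hcontra
  obtain ⟨hxp, hxC⟩ := Finset.mem_inter.mp hx
  obtain ⟨hyp, hyC⟩ := Finset.mem_inter.mp hy
  rw [hC, Finset.mem_filter] at hxC hyC
  obtain ⟨hxCov, hxdeg⟩ := hxC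
  obtain ⟨hyCov, hydeg⟩ := hyC
  have hUmem : ∀ v, v ∈ U ↔ v ∉ 𝒴.biUnion (fun p => p.1 ∪ p.2) := by
    intro v; rw [hU]; simp [Finset.mem_sdiff]
  have hxU : x ∉ U := fun h => (hUmem x).mp h hxCov
  have hyU : y ∉ U := fun h => (hUmem y).mp h hyCov
  have hsb : k + 1 ≤ 2*k - b := by omega
  -- first application of exists_pair
  have hmul : (2*k-b)*(2*k-b-1) ≤ (2*k-b)^2 := by
    rw [pow_two]; exact Nat.mul_le_mul_left _ (by omega)
  obtain ⟨A1, hA1, B1, hB1, hAB1⟩ :=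
    exists_pair k b hk hb1 hbk U
      ((U.powersetCard (k-1)).filter (fun T => insert x T ∈ E))
      (Finset.filter_subset _ _)
      (le_trans hUcard (Nat.le_add_right _ _))
      (le_trans (Nat.mul_le_mul_right _ hmul) hxdeg)
  obtain ⟨hA1P, hA1E⟩ := Finset.mem_filter.mp hA1
  obtain ⟨hB1P, hB1E⟩ := Finset.mem_filter.mp hB1
  obtain ⟨hA1U, hA1c⟩ := Finset.mem_powersetCard.mp hA1P
  obtain ⟨hB1U, hB1c⟩ := Finset.mem_powersetCard.mp hB1P
  have hABU : A1 ∪ B1 ⊆ U := Finset.union_subset hA1U hB1U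
  have hABcard : (A1 ∪ B1).card = 2*k-b-1 := by
    have := Finset.card_union_add_card_inter A1 B1
    rw [hAB1, hA1c, hB1c] at this
    omega
  -- second application on W2
  set W2 := U \ (A1 ∪ B1) with hW2
  have hW2U : W2 ⊆ U := Finset.sdiff_subset
  have hW2card : W2.card = U.card - (2*k-b-1) := by
    rw [hW2, Finset.card_sdiff_of_subset hABU, hABcard]
  have hF2card : (2*k-b)*(2*k-b-1) * (W2.card.choose (k-2)) ≤
      ((W2.powersetCard (k-1)).filter (fun T => insert y T ∈ E)).card := by
    set X := U.card.choose (k-2) with hX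
    have hsplit : (U.powersetCard (k-1)).filter (fun T => insert y T ∈ E) ⊆
        ((W2.powersetCard (k-1)).filter (fun T => insert y T ∈ E)) ∪
        (A1 ∪ B1).biUnion (fun z => (U.powersetCard (k-1)).filter (fun T => z ∈ T)) := by
      intro T hT
      obtain ⟨hTP, hTE⟩ := Finset.mem_filter.mp hT
      obtain ⟨hTU, hTc⟩ := Finset.mem_powersetCard.mp hTP
      by_cases hd : Disjoint T (A1 ∪ B1)
      · refine Finset.mem_union_left _ (Finset.mem_filter.mpr ⟨?_, hTE⟩)
        rw [Finset.mem_powersetCard]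
        exact ⟨Finset.subset_sdiff.mpr ⟨hTU, hd⟩, hTc⟩
      · obtain ⟨z, hzT, hzAB⟩ := Finset.not_disjoint_iff.mp hd
        exact Finset.mem_union_right _ (Finset.mem_biUnion.mpr
          ⟨z, hzAB, Finset.mem_filter.mpr ⟨hTP, hzT⟩⟩)
    have hbig : ((A1 ∪ B1).biUnion
        (fun z => (U.powersetCard (k-1)).filter (fun T => z ∈ T))).card
        ≤ (2*k-b-1) * X := by
      calc ((A1 ∪ B1).biUnion (fun z => (U.powersetCard (k-1)).filter (fun T => z ∈ T))).card
          ≤ ∑ z ∈ A1 ∪ B1, ((U.powersetCard (k-1)).filter (fun T => z ∈ T)).card :=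
            Finset.card_biUnion_le
        _ ≤ ∑ _z ∈ A1 ∪ B1, X := Finset.sum_le_sum (fun z _ => by
            have := count_contain (k-1) U z (by omega)
            rwa [show k-1-1 = k-2 by omega] at this)
        _ = (2*k-b-1) * X := by rw [Finset.sum_const, smul_eq_mul, hABcard]
    have hchain : ((U.powersetCard (k-1)).filter (fun T => insert y T ∈ E)).card ≤
        ((W2.powersetCard (k-1)).filter (fun T => insert y T ∈ E)).card + (2*k-b-1) * X :=
      le_trans (Finset.card_le_card hsplit)
        (le_trans (Finset.card_union_le _ _) (by omega))
    have hstep : (2*k-b)*(2*k-b-1) * X + (2*k-b-1) * X ≤ (2*k-b)^2 * X := by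
      obtain ⟨m, hm⟩ : ∃ m, 2*k-b = m+1 := ⟨2*k-b-1, by omega⟩
      rw [hm, pow_two, show m+1-1 = m by omega]
      nlinarith
    have hmono : (2*k-b)*(2*k-b-1) * (W2.card.choose (k-2)) ≤ (2*k-b)*(2*k-b-1) * X := by
      exact Nat.mul_le_mul_left _ (Nat.choose_le_choose _ (Finset.card_le_card hW2U))
    have hxd : (2*k-b)^2 * X ≤ ((U.powersetCard (k-1)).filter (fun T => insert y T ∈ E)).card := hydeg
    linarith
  have hW2big : 2*(2*k-b)^2 ≤ W2.card + (2*k-b) := by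
    have h1 := hUcard
    generalize hQ : (2*k-b)^2 = Q at h1 ⊢
    omega
  obtain ⟨A2, hA2, B2, hB2, hAB2⟩ :=
    exists_pair k b hk hb1 hbk W2
      ((W2.powersetCard (k-1)).filter (fun T => insert y T ∈ E))
      (Finset.filter_subset _ _) hW2big hF2card
  obtain ⟨hA2P, hA2E⟩ := Finset.mem_filter.mp hA2
  obtain ⟨hB2P, hB2E⟩ := Finset.mem_filter.mp hB2
  obtain ⟨hA2W, hA2c⟩ := Finset.mem_powersetCard.mp hA2P
  obtain ⟨hB2W, hB2c⟩ := Finset.mem_powersetCard.mp hB2P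
  -- assemble new tiling
  set q1 : Finset V × Finset V := (insert x A1, insert x B1) with hq1
  set q2 : Finset V × Finset V := (insert y A2, insert y B2) with hq2
  have hq1v : q1.1 ∪ q1.2 = insert x (A1 ∪ B1) := by
    ext u; simp only [hq1, Finset.mem_union, Finset.mem_insert]; tauto
  have hq2v : q2.1 ∪ q2.2 = insert y (A2 ∪ B2) := by
    ext u; simp only [hq2, Finset.mem_union, Finset.mem_insert]; tauto
  have hq1i : q1.1 ∩ q1.2 = insert x (A1 ∩ B1) := by
    ext u; simp only [hq1, Finset.mem_inter, Finset.mem_insert]; tauto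
  have hq2i : q2.1 ∩ q2.2 = insert y (A2 ∩ B2) := by
    ext u; simp only [hq2, Finset.mem_inter, Finset.mem_insert]; tauto
  have hxA1B1 : x ∉ A1 ∩ B1 := fun h => hxU (hA1U (Finset.mem_inter.mp h).1)
  have hyA2B2 : y ∉ A2 ∩ B2 := fun h => hyU (hW2U (hA2W (Finset.mem_inter.mp h).1))
  have hq1b : (q1.1 ∩ q1.2).card = b := by
    rw [hq1i, Finset.card_insert_of_notMem hxA1B1, hAB1]; omega
  have hq2b : (q2.1 ∩ q2.2).card = b := by
    rw [hq2i, Finset.card_insert_of_notMem hyA2B2, hAB2]; omega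
  -- disjointness facts
  have hCovmem : ∀ q ∈ 𝒴, ∀ v ∈ q.1 ∪ q.2, v ∈ 𝒴.biUnion (fun r => r.1 ∪ r.2) := by
    intro q hq v hv
    exact Finset.mem_biUnion.mpr ⟨q, hq, hv⟩
  have hdisj1 : ∀ q ∈ 𝒴, q ≠ p → Disjoint (q1.1 ∪ q1.2) (q.1 ∪ q.2) := by
    intro q hq hqp
    rw [hq1v, Finset.disjoint_left]
    intro a ha haq
    rcases Finset.mem_insert.mp ha with rfl | ha2
    · exact (Finset.disjoint_left.mp (h𝒴disj p hp q hq (Ne.symm hqp)) hxp) haq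
    · exact ((hUmem a).mp (hABU ha2)) (hCovmem q hq a haq)
  have hdisj2 : ∀ q ∈ 𝒴, q ≠ p → Disjoint (q2.1 ∪ q2.2) (q.1 ∪ q.2) := by
    intro q hq hqp
    rw [hq2v, Finset.disjoint_left]
    intro a ha haq
    rcases Finset.mem_insert.mp ha with rfl | ha2
    · exact (Finset.disjoint_left.mp (h𝒴disj p hp q hq (Ne.symm hqp)) hyp) haq
    · exact ((hUmem a).mp (hW2U ((Finset.union_subset hA2W hB2W) ha2)))
        (hCovmem q hq a haq)
  have hdisj12 : Disjoint (q1.1 ∪ q1.2) (q2.1 ∪ q2.2) := by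
    rw [hq1v, hq2v, Finset.disjoint_left]
    intro a ha ha2
    rcases Finset.mem_insert.mp ha with rfl | haU
    · rcases Finset.mem_insert.mp ha2 with h | h
      · exact hxy h
      · exact hxU (hW2U ((Finset.union_subset hA2W hB2W) h))
    · have haU' : a ∈ U := hABU haU
      rcases Finset.mem_insert.mp ha2 with h | h
      · exact hyU (h ▸ haU')
      · have : a ∈ W2 := (Finset.union_subset hA2W hB2W) h
        exact (Finset.mem_sdiff.mp this).2 haU
  -- q1, q2 not in 𝒴, and q1 ≠ q2
  have hq1not : q1 ∉ 𝒴.erase p := by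
    intro h
    obtain ⟨hne, hmem⟩ := Finset.mem_erase.mp h
    have := h𝒴disj q1 hmem p hp hne
    exact (Finset.disjoint_left.mp this
      (Finset.mem_union_left _ (Finset.mem_insert_self x A1))) hxp
  have hq2not : q2 ∉ 𝒴.erase p := by
    intro h
    obtain ⟨hne, hmem⟩ := Finset.mem_erase.mp h
    have := h𝒴disj q2 hmem p hp hne
    exact (Finset.disjoint_left.mp this
      (Finset.mem_union_left _ (Finset.mem_insert_self y A2))) hyp
  have hq12 : q1 ≠ q2 := by
    intro h
    have hxq2 : x ∈ insert y A2 := by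
      have : q1.1 = q2.1 := by rw [h]
      rw [hq1] at this
      simp only [hq2] at this
      rw [← this]
      exact Finset.mem_insert_self x A1
    rcases Finset.mem_insert.mp hxq2 with h' | h'
    · exact hxy h'
    · exact hxU (hW2U (hA2W h'))
  set 𝒯 := insert q1 (insert q2 (𝒴.erase p)) with h𝒯
  have hcond1 : ∀ r ∈ 𝒯, r.1 ∈ E ∧ r.2 ∈ E ∧ (r.1 ∩ r.2).card = b := by
    intro r hr
    rcases Finset.mem_insert.mp hr with rfl | hr
    · exact ⟨hA1E, hB1E, hq1b⟩
    rcases Finset.mem_insert.mp hr with rfl | hr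
    · exact ⟨hA2E, hB2E, hq2b⟩
    · exact h𝒴 r (Finset.mem_of_mem_erase hr)
  have hcond2 : ∀ r ∈ 𝒯, ∀ s ∈ 𝒯, r ≠ s → Disjoint (r.1 ∪ r.2) (s.1 ∪ s.2) := by
    intro r hr s hs hrs
    rcases Finset.mem_insert.mp hr with rfl | hr' <;>
      rcases Finset.mem_insert.mp hs with rfl | hs'
    · exact absurd rfl hrs
    · rcases Finset.mem_insert.mp hs' with rfl | hs''
      · exact hdisj12
      · exact hdisj1 s (Finset.mem_of_mem_erase hs'') (Finset.ne_of_mem_erase hs'')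
    · rcases Finset.mem_insert.mp hr' with rfl | hr''
      · exact hdisj12.symm
      · exact (hdisj1 r (Finset.mem_of_mem_erase hr'') (Finset.ne_of_mem_erase hr'')).symm
    · rcases Finset.mem_insert.mp hr' with rfl | hr'' <;>
        rcases Finset.mem_insert.mp hs' with rfl | hs''
      · exact absurd rfl hrs
      · exact hdisj2 s (Finset.mem_of_mem_erase hs'') (Finset.ne_of_mem_erase hs'')
      · exact (hdisj2 r (Finset.mem_of_mem_erase hr'') (Finset.ne_of_mem_erase hr'')).symm
      · exact h𝒴disj r (Finset.mem_of_mem_erase hr'') s (Finset.mem_of_mem_erase hs'') hrs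
  have hcard𝒯 : 𝒯.card = 𝒴.card + 1 := by
    rw [h𝒯, Finset.card_insert_of_notMem, Finset.card_insert_of_notMem hq2not,
      Finset.card_erase_of_mem hp]
    · have : 1 ≤ 𝒴.card := Finset.card_pos.mpr ⟨p, hp⟩
      omega
    · intro h
      rcases Finset.mem_insert.mp h with h' | h'
      · exact hq12 h'
      · exact hq1not h'
  have := hmax 𝒯 hcond1 hcond2
  omega
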